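/- For every d ≥ 1, there exists a (0,1)-2d-layer full-attention score-BAPO solving the d-Hop Induction Heads problem. -/

import Mathlib

open Finset Filter Asymptotics
open scoped Classical

/-- An `(a, b)` `d`-layer full-attention score-BAPO: a prefix oracle `f`, `d`
attention functions `g j` (each taking the suffix, split index, a candidate token
with its 1-based index, and the previous layer's attended set, and outputting a
score in `[0, 1]`), and a suffix oracle `h`. Attention may select tokens from the
entire input, not only the prefix. -/
structure MLBAPO (Sigma : Type) (Out : Type) (a b d : ℕ) where
  f : List Sigma → (Fin a → Bool)
  g : Fin d → List Sigma → ℕ → Sigma → ℕ → Finset (Sigma × ℕ) → ℝ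
  g_nonneg : ∀ j suf k t i G, 0 ≤ g j suf k t i G
  g_le_one : ∀ j suf k t i G, g j suf k t i G ≤ 1
  h : (Fin a → Bool) → Finset (Sigma × ℕ) → List Sigma → ℕ → Out

namespace MLBAPO

variable {Sigma Out : Type} {a b d : ℕ}

/-- The (token, 1-based index) pairs of the whole input `x` with positive score at
layer `j`, given split index `k` and previous attended set `Gp`. -/
noncomputable def cands (M : MLBAPO Sigma Out a b d) (x : List Sigma) (k : ℕ)
    (j : Fin d) (Gp : Finset (Sigma × ℕ)) : Finset (Sigma × ℕ) :=
  (Finset.univ.filter fun i : Fin x.length =>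
      0 < M.g j (x.drop k) k (x.get i) ((i : ℕ) + 1) Gp).image
    fun i => (x.get i, (i : ℕ) + 1)

/-- Total attention score of a set `G` at layer `j`. -/
noncomputable def score (M : MLBAPO Sigma Out a b d) (x : List Sigma) (k : ℕ)
    (j : Fin d) (Gp G : Finset (Sigma × ℕ)) : ℝ :=
  ∑ q ∈ G, M.g j (x.drop k) k q.1 q.2 Gp

/-- `G` is an admissible attended set at layer `j` given the previous attended set
`Gp`: among all subsets of the positively-scored pairs of size at most `b`, it
maximizes the total score. -/
noncomputable def Admissible (M : MLBAPO Sigma Out a b d) (x : List Sigma) (k : ℕ)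
    (j : Fin d) (Gp G : Finset (Sigma × ℕ)) : Prop :=
  G ⊆ M.cands x k j Gp ∧ G.card ≤ b ∧
    ∀ G' : Finset (Sigma × ℕ), G' ⊆ M.cands x k j Gp → G'.card ≤ b →
      M.score x k j Gp G' ≤ M.score x k j Gp G

/-- `Gs` is an attended-set sequence: `Gs 0 = ∅` and each `Gs (j+1)` is admissible
at layer `j` given `Gs j`. -/
noncomputable def AttSeq (M : MLBAPO Sigma Out a b d) (x : List Sigma) (k : ℕ)
    (Gs : ℕ → Finset (Sigma × ℕ)) : Prop :=
  Gs 0 = ∅ ∧ ∀ j : Fin d, M.Admissible x k j (Gs j) (Gs (j + 1))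

/-- The multi-layer score-BAPO outputs `y` on input `x`: for every split index
`k < |x|` and every attended-set sequence `Gs`, the suffix oracle applied to the
last attended set `Gs d` outputs `y`. -/
noncomputable def SolvesOn (M : MLBAPO Sigma Out a b d) (x : List Sigma) (y : Out) :
    Prop :=
  ∀ k, k < x.length →
    ∀ Gs : ℕ → Finset (Sigma × ℕ), M.AttSeq x k Gs →
      M.h (M.f (x.take k)) (Gs d) (x.drop k) k = y

end MLBAPO

/-- One hop step (1-based indexing): `hopStep x t = max({0} ∪ {j ∈ [t] : x_{j-1} = x_t})`. -/
noncomputable def hopStep {Sigma : Type} (x : List Sigma) (t : ℕ) : ℕ :=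
  (Finset.range (t + 1)).sup fun j =>
    if 2 ≤ j ∧ j ≤ t ∧ x[j - 2]? = x[t - 1]? then j else 0

/-- Iterated hops: `hopIter x i` is `hop_i(x)` for `i ≥ 1`, so that
`hop₁(x) = max({0} ∪ {j ∈ [n] : x_{j-1} = x_n})` and
`hop_{i+1}(x) = max({0} ∪ {j ∈ [hop_i(x)] : x_{j-1} = x_{hop_i(x)}})`. -/
noncomputable def hopIter {Sigma : Type} (x : List Sigma) : ℕ → ℕ
  | 0 => x.length
  | i + 1 => hopStep x (hopIter x i)


section InductionHeadsProof

variable {S : Type}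

lemma hopStep_le (x : List S) (t : ℕ) : hopStep x t ≤ t := by
  apply Finset.sup_le
  intro j _
  split_ifs with h
  · exact h.2.1
  · exact Nat.zero_le t

lemma hopStep_spec (x : List S) (t : ℕ) (h : hopStep x t ≠ 0) :
    2 ≤ hopStep x t ∧ hopStep x t ≤ t ∧ x[hopStep x t - 2]? = x[t - 1]? := by
  obtain ⟨j, _, hje⟩ := Finset.exists_mem_eq_sup (Finset.range (t + 1))
    ⟨0, Finset.mem_range.mpr (Nat.succ_pos t)⟩
    (fun j => if 2 ≤ j ∧ j ≤ t ∧ x[j - 2]? = x[t - 1]? then j else 0)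
  by_cases hc : 2 ≤ j ∧ j ≤ t ∧ x[j - 2]? = x[t - 1]?
  · rw [hopStep, hje, if_pos hc]; exact hc
  · exfalso; apply h; rw [hopStep, hje, if_neg hc]

lemma le_hopStep (x : List S) (t j : ℕ) (h2 : 2 ≤ j) (hjt : j ≤ t)
    (hx : x[j - 2]? = x[t - 1]?) : j ≤ hopStep x t := by
  have := Finset.le_sup
    (f := fun j => if 2 ≤ j ∧ j ≤ t ∧ x[j - 2]? = x[t - 1]? then j else 0)
    (Finset.mem_range.mpr (show j < t + 1 by omega))
  simp [h2, hjt, hx] at this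
  exact this

lemma hopStep_zero (x : List S) : hopStep x 0 = 0 :=
  Nat.le_antisymm (hopStep_le x 0) (Nat.zero_le _)

open Classical in
/-- The attention functions of the induction-heads machine. -/
noncomputable def hopG (S : Type) (dd : ℕ) :
    Fin dd → List S → ℕ → S → ℕ → Finset (S × ℕ) → ℝ := fun j suf k tok p Gp =>
  if (j : ℕ) % 2 = 0 then
    (if (j : ℕ) = 0 then (suf.getLast?).map (fun τ => (τ, k + suf.length))
     else Gp.toList.head?).elim 0
      (fun q => if tok = q.1 ∧ p + 1 ≤ q.2 then (p : ℝ) / (p + 1) else 0)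
  else
    Gp.toList.head?.elim 0 (fun q => if p = q.2 + 1 then (1 : ℝ) else 0)

lemma elim_bounds {A : Type*} (o : Option A) (F : A → ℝ)
    (h : ∀ q, 0 ≤ F q ∧ F q ≤ 1) : 0 ≤ o.elim 0 F ∧ o.elim 0 F ≤ 1 := by
  cases o with
  | none => norm_num
  | some q => simpa using h q

lemma hopG_bounds (S : Type) (dd : ℕ) :
    ∀ j suf k t i G, 0 ≤ hopG S dd j suf k t i G ∧ hopG S dd j suf k t i G ≤ 1 := by
  intro j suf k tok i G
  have hb1 : (0:ℝ) ≤ (i : ℝ) / (i + 1) := by positivity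
  have hb2 : (i : ℝ) / (i + 1) ≤ 1 := by
    rw [div_le_one (by positivity)]
    linarith [Nat.cast_nonneg (α := ℝ) i]
  unfold hopG
  split_ifs with h1 h2 <;>
    apply elim_bounds <;> intro q <;> constructor <;> split_ifs <;> norm_num <;>
    first | exact hb1 | exact hb2

/-- The induction-heads machine. -/
noncomputable def hopM (S : Type) (dd : ℕ) : MLBAPO S (Option S) 0 1 dd where
  f := fun _ i => i.elim0
  g := hopG S dd
  g_nonneg := fun j suf k t i G => (hopG_bounds S dd j suf k t i G).1
  g_le_one := fun j suf k t i G => (hopG_bounds S dd j suf k t i G).2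
  h := fun _ G _ _ => G.toList.head?.map Prod.fst

end InductionHeadsProof

section InductionHeadsProof2

variable {S : Type} {dd : ℕ}

lemma mem_cands_iff (M : MLBAPO S (Option S) 0 1 dd) (x : List S) (k : ℕ) (j : Fin dd)
    (Gp : Finset (S × ℕ)) (q : S × ℕ) :
    q ∈ M.cands x k j Gp ↔ ∃ i : Fin x.length,
      0 < M.g j (x.drop k) k (x.get i) ((i : ℕ) + 1) Gp ∧ (x.get i, (i : ℕ) + 1) = q := by
  simp [MLBAPO.cands]

lemma adm_of_empty {M : MLBAPO S (Option S) 0 1 dd} {x : List S} {k : ℕ} {j : Fin dd}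
    {Gp G : Finset (S × ℕ)} (h : M.Admissible x k j Gp G)
    (hc : M.cands x k j Gp = ∅) : G = ∅ :=
  Finset.subset_empty.mp (hc ▸ h.1)

lemma adm_of_zero {M : MLBAPO S (Option S) 0 1 dd} {x : List S} {k : ℕ} {j : Fin dd}
    {Gp G : Finset (S × ℕ)} (h : M.Admissible x k j Gp G)
    (hg : ∀ t i, M.g j (x.drop k) k t i Gp = 0) : G = ∅ := by
  apply adm_of_empty h
  rw [Finset.eq_empty_iff_forall_notMem]
  intro q hq
  obtain ⟨i, hpos, -⟩ := (mem_cands_iff M x k j Gp q).mp hq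
  rw [hg] at hpos
  exact lt_irrefl 0 hpos

lemma adm_of_unique {M : MLBAPO S (Option S) 0 1 dd} {x : List S} {k : ℕ} {j : Fin dd}
    {Gp G : Finset (S × ℕ)} {q : S × ℕ} (h : M.Admissible x k j Gp G)
    (hq : q ∈ M.cands x k j Gp)
    (hpos : 0 < M.g j (x.drop k) k q.1 q.2 Gp)
    (hmax : ∀ q' ∈ M.cands x k j Gp, q' ≠ q →
      M.g j (x.drop k) k q'.1 q'.2 Gp < M.g j (x.drop k) k q.1 q.2 Gp) :
    G = {q} := by
  obtain ⟨hsub, hcard, hopt⟩ := h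
  have hsq := hopt {q} (Finset.singleton_subset_iff.mpr hq) (by simp)
  rw [MLBAPO.score, Finset.sum_singleton] at hsq
  rcases G.eq_empty_or_nonempty with hG | ⟨q', hq'⟩
  · exfalso
    rw [hG] at hsq
    rw [MLBAPO.score, Finset.sum_empty] at hsq
    exact absurd (lt_of_lt_of_le hpos hsq) (lt_irrefl 0)
  · have hG1 : G = {q'} := by
      apply Finset.eq_singleton_iff_unique_mem.mpr
      refine ⟨hq', fun b hb => ?_⟩
      have := Finset.card_le_one.mp hcard
      exact this b hb q' hq'
    by_cases hqq : q' = q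
    · rw [hG1, hqq]
    · exfalso
      rw [hG1, MLBAPO.score, Finset.sum_singleton] at hsq
      exact absurd (lt_of_le_of_lt hsq (hmax q' (hsub hq') hqq)) (lt_irrefl _)

end InductionHeadsProof2

section InductionHeadsProof3

variable {S : Type}

lemma frac_lt {a b : ℕ} (h : a < b) : (a : ℝ) / (a + 1) < (b : ℝ) / (b + 1) := by
  rw [div_lt_div_iff₀ (by positivity) (by positivity)]
  have : (a : ℝ) < b := by exact_mod_cast h
  nlinarith

lemma match_layer {d : ℕ} (x : List S) (k : ℕ) (j : Fin (2 * d)) (hj2 : (j : ℕ) % 2 = 0)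
    (Gp G : Finset (S × ℕ)) (τ : S) (t : ℕ)
    (hpair : (if (j : ℕ) = 0 then ((x.drop k).getLast?).map (fun τ => (τ, k + (x.drop k).length))
        else Gp.toList.head?) = some (τ, t))
    (ht : t ≤ x.length) (hτ : x[t - 1]? = some τ)
    (hadm : (hopM S (2 * d)).Admissible x k j Gp G) :
    G = if hopStep x t = 0 then ∅ else {(τ, hopStep x t - 1)} := by
  have hg : ∀ tok p, (hopM S (2 * d)).g j (x.drop k) k tok p Gp
      = if tok = τ ∧ p + 1 ≤ t then (p : ℝ) / (p + 1) else 0 := by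
    intro tok p
    show hopG S (2 * d) j (x.drop k) k tok p Gp = _
    unfold hopG
    rw [if_pos hj2, hpair]
    rfl
  have hmem : ∀ q : S × ℕ, q ∈ (hopM S (2 * d)).cands x k j Gp ↔
      ∃ i : Fin x.length, x.get i = τ ∧ (i : ℕ) + 1 + 1 ≤ t ∧ (x.get i, (i : ℕ) + 1) = q := by
    intro q
    rw [mem_cands_iff]
    constructor
    · rintro ⟨i, hpos, hiq⟩
      rw [hg] at hpos
      by_cases hc : x.get i = τ ∧ (i : ℕ) + 1 + 1 ≤ t
      · exact ⟨i, hc.1, hc.2, hiq⟩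
      · rw [if_neg hc] at hpos; exact absurd hpos (lt_irrefl 0)
    · rintro ⟨i, h1, h2, hiq⟩
      refine ⟨i, ?_, hiq⟩
      rw [hg, if_pos ⟨h1, h2⟩]
      exact div_pos (by exact_mod_cast Nat.succ_pos (i : ℕ)) (by positivity)
  have hxi : ∀ i : Fin x.length, x[(i : ℕ)]? = some (x.get i) := by
    intro i
    rw [List.get_eq_getElem]
    exact List.getElem?_eq_getElem i.2
  by_cases h0 : hopStep x t = 0
  · rw [if_pos h0]
    apply adm_of_empty hadm
    rw [Finset.eq_empty_iff_forall_notMem]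
    intro q hq
    obtain ⟨i, h1, h2, -⟩ := (hmem q).mp hq
    have hle : (i : ℕ) + 2 ≤ hopStep x t := by
      apply le_hopStep x t ((i : ℕ) + 2) (by omega) (by omega)
      have e : (i : ℕ) + 2 - 2 = (i : ℕ) := by omega
      rw [e, hxi i, h1, hτ]
    omega
  · rw [if_neg h0]
    obtain ⟨hs2, hst, hsx⟩ := hopStep_spec x t h0
    have hlen : hopStep x t - 2 < x.length := by omega
    set i₀ : Fin x.length := ⟨hopStep x t - 2, hlen⟩ with hi₀
    have hx0 : x.get i₀ = τ := by
      have := hxi i₀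
      rw [hi₀] at this
      rw [hsx, hτ] at this
      exact (Option.some.injEq _ _).mp this.symm
    have hq : (τ, hopStep x t - 1) ∈ (hopM S (2 * d)).cands x k j Gp := by
      rw [hmem]
      refine ⟨i₀, hx0, by simp only [hi₀]; omega, ?_⟩
      have e : (i₀ : ℕ) + 1 = hopStep x t - 1 := by simp only [hi₀]; omega
      rw [hx0, e]
    have hpos : 0 < (hopM S (2 * d)).g j (x.drop k) k τ (hopStep x t - 1) Gp := by
      rw [hg, if_pos ⟨rfl, by omega⟩]
      exact div_pos (by exact_mod_cast (show 0 < hopStep x t - 1 by omega)) (by positivity)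
    have hmax : ∀ q' ∈ (hopM S (2 * d)).cands x k j Gp, q' ≠ (τ, hopStep x t - 1) →
        (hopM S (2 * d)).g j (x.drop k) k q'.1 q'.2 Gp
          < (hopM S (2 * d)).g j (x.drop k) k τ (hopStep x t - 1) Gp := by
      intro q' hq' hne
      obtain ⟨i, h1, h2, hiq⟩ := (hmem q').mp hq'
      have hle : (i : ℕ) + 2 ≤ hopStep x t := by
        apply le_hopStep x t ((i : ℕ) + 2) (by omega) (by omega)
        have e : (i : ℕ) + 2 - 2 = (i : ℕ) := by omega
        rw [e, hxi i, h1, hτ]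
      have hne' : (i : ℕ) + 1 ≠ hopStep x t - 1 := by
        intro he
        apply hne
        rw [← hiq, h1, he]
      rw [← hiq, hg, hg, if_pos ⟨h1, h2⟩, if_pos ⟨rfl, by omega⟩]
      exact frac_lt (by omega)
    exact adm_of_unique hadm hq hpos hmax

lemma match_layer_none {d : ℕ} (x : List S) (k : ℕ) (j : Fin (2 * d))
    (hj2 : (j : ℕ) % 2 = 0) (Gp G : Finset (S × ℕ))
    (hpair : (if (j : ℕ) = 0 then ((x.drop k).getLast?).map (fun τ => (τ, k + (x.drop k).length))
        else Gp.toList.head?) = (none : Option (S × ℕ)))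
    (hadm : (hopM S (2 * d)).Admissible x k j Gp G) : G = ∅ := by
  apply adm_of_zero hadm
  intro tok p
  show hopG S (2 * d) j (x.drop k) k tok p Gp = 0
  unfold hopG
  rw [if_pos hj2, hpair]
  rfl

lemma retrieve_layer {d : ℕ} (x : List S) (k : ℕ) (j : Fin (2 * d)) (hj2 : (j : ℕ) % 2 = 1)
    (Gp G : Finset (S × ℕ)) (τ : S) (p : ℕ) (hGp : Gp = {(τ, p)}) (hp : p < x.length)
    (hadm : (hopM S (2 * d)).Admissible x k j Gp G) :
    G = {(x.get ⟨p, hp⟩, p + 1)} := by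
  have hg : ∀ tok i, (hopM S (2 * d)).g j (x.drop k) k tok i Gp
      = if i = p + 1 then 1 else 0 := by
    intro tok i
    show hopG S (2 * d) j (x.drop k) k tok i Gp = _
    unfold hopG
    rw [if_neg (by omega), hGp, Finset.toList_singleton]
    rfl
  have hq : (x.get ⟨p, hp⟩, p + 1) ∈ (hopM S (2 * d)).cands x k j Gp := by
    rw [mem_cands_iff]
    exact ⟨⟨p, hp⟩, by rw [hg, if_pos rfl]; norm_num, rfl⟩
  have hpos : 0 < (hopM S (2 * d)).g j (x.drop k) k (x.get ⟨p, hp⟩) (p + 1) Gp := by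
    rw [hg, if_pos rfl]; norm_num
  have hmax : ∀ q' ∈ (hopM S (2 * d)).cands x k j Gp, q' ≠ (x.get ⟨p, hp⟩, p + 1) →
      (hopM S (2 * d)).g j (x.drop k) k q'.1 q'.2 Gp
        < (hopM S (2 * d)).g j (x.drop k) k (x.get ⟨p, hp⟩) (p + 1) Gp := by
    intro q' hq' hne
    exfalso
    obtain ⟨i, hposi, hiq⟩ := (mem_cands_iff _ x k j Gp q').mp hq'
    rw [hg] at hposi
    by_cases hc : (i : ℕ) + 1 = p + 1
    · apply hne
      rw [← hiq]
      have : (i : ℕ) = p := by omega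
      have hip : i = (⟨p, hp⟩ : Fin x.length) := Fin.ext this
      rw [hip]
    · rw [if_neg hc] at hposi
      exact absurd hposi (lt_irrefl 0)
  exact adm_of_unique hadm hq hpos hmax

lemma retrieve_layer_none {d : ℕ} (x : List S) (k : ℕ) (j : Fin (2 * d))
    (hj2 : (j : ℕ) % 2 = 1) (Gp G : Finset (S × ℕ)) (hGp : Gp = ∅)
    (hadm : (hopM S (2 * d)).Admissible x k j Gp G) : G = ∅ := by
  apply adm_of_zero hadm
  intro tok p
  show hopG S (2 * d) j (x.drop k) k tok p Gp = 0
  unfold hopG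
  rw [if_neg (by omega), hGp, Finset.toList_empty]
  rfl

end InductionHeadsProof3

/-- **d-Hop Induction Heads is solvable by a `(0,1)`-2d-layer full-attention
score-BAPO.** For every `d ≥ 1` and every alphabet, there is a multi-layer
full-attention score-BAPO with prefix bandwidth `0`, attention bandwidth `1`, and
`2d` layers that outputs the token `x_{hop_d(x)}` if `hop_d(x) ≠ 0` and the special
token `⊥` (here `none`) otherwise. -/
theorem induction_heads_mlbapo (d : ℕ) (hd : 1 ≤ d) (Sigma : Type) :
    ∃ M : MLBAPO Sigma (Option Sigma) 0 1 (2 * d),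
      ∀ x : List Sigma,
        M.SolvesOn x (if hopIter x d = 0 then none else x[hopIter x d - 1]?) := by
  refine ⟨hopM Sigma (2 * d), fun x => ?_⟩
  intro k hk Gs hSeq
  obtain ⟨hGs0, hadm⟩ := hSeq
  -- the two-layer step
  have step : ∀ m : ℕ, m < d → ∀ (τ : Sigma) (t : ℕ), t ≠ 0 → t ≤ x.length →
      x[t - 1]? = some τ →
      (if (2 * m : ℕ) = 0 then
          ((x.drop k).getLast?).map (fun τ => (τ, k + (x.drop k).length))
        else (Gs (2 * m)).toList.head?) = some (τ, t) →
      (hopStep x t = 0 ∧ Gs (2 * m + 2) = ∅) ∨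
        (hopStep x t ≠ 0 ∧ hopStep x t ≤ x.length ∧
          ∃ τ' : Sigma, x[hopStep x t - 1]? = some τ' ∧ Gs (2 * m + 2) = {(τ', hopStep x t)}) := by
    intro m hm τ t ht0 htn hτ hpair
    have hj1 : (2 * m) < 2 * d := by omega
    have hj2 : (2 * m + 1) < 2 * d := by omega
    have ha1 := hadm ⟨2 * m, hj1⟩
    have ha2 := hadm ⟨2 * m + 1, hj2⟩
    have hG1 := match_layer x k ⟨2 * m, hj1⟩ (show 2 * m % 2 = 0 by omega)
      (Gs (2 * m)) (Gs (2 * m + 1)) τ t hpair htn hτ ha1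
    by_cases hs0 : hopStep x t = 0
    · left
      refine ⟨hs0, ?_⟩
      rw [if_pos hs0] at hG1
      exact retrieve_layer_none x k ⟨2 * m + 1, hj2⟩ (show (2 * m + 1) % 2 = 1 by omega)
        _ _ hG1 ha2
    · right
      obtain ⟨hs2, hst, -⟩ := hopStep_spec x t hs0
      rw [if_neg hs0] at hG1
      have hp : hopStep x t - 1 < x.length := by omega
      have hG2 := retrieve_layer x k ⟨2 * m + 1, hj2⟩ (show (2 * m + 1) % 2 = 1 by omega)
        _ _ τ (hopStep x t - 1) hG1 hp ha2
      refine ⟨hs0, by omega, x.get ⟨hopStep x t - 1, hp⟩, ?_, ?_⟩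
      · rw [List.get_eq_getElem]
        exact List.getElem?_eq_getElem hp
      · rw [hG2, show hopStep x t - 1 + 1 = hopStep x t from by omega]
  -- base-layer input pair
  have hn1 : x.length - 1 < x.length := by omega
  have hτn : x[x.length - 1]? = some (x.get ⟨x.length - 1, hn1⟩) := by
    rw [List.get_eq_getElem]
    exact List.getElem?_eq_getElem hn1
  have hdl : (x.drop k).length = x.length - k := List.length_drop
  have hgl : (x.drop k).getLast? = some (x.get ⟨x.length - 1, hn1⟩) := by
    rw [List.getLast?_eq_getElem? , List.getElem?_drop, hdl,
      show k + (x.length - k - 1) = x.length - 1 from by omega]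
    exact hτn
  have hpair0 : (if (2 * 0 : ℕ) = 0 then
      ((x.drop k).getLast?).map (fun τ => (τ, k + (x.drop k).length))
    else (Gs (2 * 0)).toList.head?) = some (x.get ⟨x.length - 1, hn1⟩, x.length) := by
    rw [if_pos rfl, hgl, Option.map_some, hdl, show k + (x.length - k) = x.length from by omega]
  -- the invariant
  have inv : ∀ m : ℕ, 1 ≤ m → m ≤ d →
      (hopIter x m = 0 ∧ Gs (2 * m) = ∅) ∨
      (hopIter x m ≠ 0 ∧ hopIter x m ≤ x.length ∧
        ∃ τ' : Sigma, x[hopIter x m - 1]? = some τ' ∧ Gs (2 * m) = {(τ', hopIter x m)}) := by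
    intro m
    induction m with
    | zero => intro h; omega
    | succ m ih =>
      intro _ hmd
      rw [show 2 * (m + 1) = 2 * m + 2 from by ring]
      have hIm : hopIter x (m + 1) = hopStep x (hopIter x m) := rfl
      by_cases hm0 : m = 0
      · subst hm0
        have h1 : hopIter x 1 = hopStep x x.length := by
          simp only [hopIter]
        rw [hIm]
        have := step 0 (by omega) (x.get ⟨x.length - 1, hn1⟩) x.length (by omega) le_rfl
          hτn hpair0
        simpa only [hopIter] using this
      · have hm1 : 1 ≤ m := by omega
        rw [hIm]
        rcases ih hm1 (by omega) with ⟨hz, hGsm⟩ | ⟨hnz, hle, τ', hτ', hGsm⟩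
        · left
          rw [hz, hopStep_zero]
          refine ⟨rfl, ?_⟩
          have ha1 := hadm ⟨2 * m, by omega⟩
          have hG1 : Gs (2 * m + 1) = ∅ :=
            match_layer_none x k ⟨2 * m, by omega⟩ (show 2 * m % 2 = 0 by omega) _ _
              (by rw [if_neg (show ¬(2 * m = 0) by omega), hGsm, Finset.toList_empty]; rfl) ha1
          exact retrieve_layer_none x k ⟨2 * m + 1, by omega⟩
            (show (2 * m + 1) % 2 = 1 by omega) _ _ hG1 (hadm ⟨2 * m + 1, by omega⟩)
        · exact step m (by omega) τ' (hopIter x m) hnz hle hτ'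
            (by rw [if_neg (show ¬(2 * m = 0) by omega), hGsm, Finset.toList_singleton]; rfl)
  rcases inv d hd le_rfl with ⟨hz, hGsd⟩ | ⟨hnz, hle, τ', hτ', hGsd⟩
  · rw [if_pos hz]
    show (Gs (2 * d)).toList.head?.map Prod.fst = none
    rw [hGsd, Finset.toList_empty]
    rfl
  · rw [if_neg hnz]
    show (Gs (2 * d)).toList.head?.map Prod.fst = x[hopIter x d - 1]?
    rw [hGsd, Finset.toList_singleton, hτ']
    rfl
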